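/- Let F be a field of characteristic 3, let V be a 2l-dimensional vector space over F with basis B₁ = {e₁,…,e_{2l}}, and let B₂ = {e₁+e₂, e₁−e₂, e₃+e₄, e₃−e₄, …, e_{2l−1}+e_{2l}, e_{2l−1}−e_{2l}}. Then B₂ is also a basis of V and |B₁* + B₂*| = 8^l. -/

import Mathlib

open Finset Pointwise

/-- The subset-sum set of a finite set `B`: all sums `∑_{a ∈ A} a` over `A ⊆ B`. -/
def subsetSums {V : Type*} [AddCommMonoid V] [DecidableEq V] (B : Finset V) : Finset V :=
  B.powerset.image fun A => A.sum id

/-- Boolean indicator in `ZMod 3`. -/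
def bi (b : Bool) : ZMod 3 := if b then 1 else 0

/-- The 8-element set of achievable coordinate pairs. -/
def Tset : Finset (ZMod 3 × ZMod 3) :=
  {(0,0),(1,0),(0,1),(1,1),(1,2),(2,0),(2,1),(2,2)}

lemma Tset_card : Tset.card = 8 := by decide

lemma mem_Tset (a1 a2 b1 b2 : Bool) :
    (bi a1 + bi b2 + bi b1, bi a2 + bi b2 - bi b1) ∈ Tset := by
  revert a1 a2 b1 b2; decide

lemma Tset_surj : ∀ t ∈ Tset, ∃ a1 a2 b1 b2 : Bool,
    (bi a1 + bi b2 + bi b1, bi a2 + bi b2 - bi b1) = t := by decide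

lemma subsetSums_image {ι V : Type*} [Fintype ι] [DecidableEq ι] [DecidableEq V]
    [AddCommMonoid V] (f : ι → V) (hf : Function.Injective f) :
    subsetSums ((Finset.univ : Finset ι).image f)
      = (Finset.univ : Finset ι).powerset.image fun A => ∑ i ∈ A, f i := by
  unfold subsetSums
  ext x
  simp only [mem_image, mem_powerset]
  have hs : ∀ s : Finset ι, (s.image f).sum id = ∑ i ∈ s, f i := fun s =>
    Finset.sum_image fun a _ b _ h => hf h
  constructor
  · rintro ⟨A, hA, rfl⟩
    obtain ⟨A', -, rfl⟩ := Finset.subset_image_iff.mp hA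
    exact ⟨A', subset_univ _, (hs A').symm⟩
  · rintro ⟨A, -, rfl⟩
    exact ⟨A.image f, Finset.image_subset_image (subset_univ _), hs A⟩

theorem stmt14 {F V : Type*} [Field F] [CharP F 3]
    [AddCommGroup V] [Module F V] [DecidableEq V]
    (l : ℕ) (e : Module.Basis (Fin l × Bool) F V)
    (B₁ B₂ : Finset V)
    (hB₁ : B₁ = (Finset.univ : Finset (Fin l × Bool)).image ⇑e)
    (hB₂ : B₂ = (Finset.univ : Finset (Fin l × Bool)).image fun p =>
      if p.2 then e (p.1, false) + e (p.1, true) else e (p.1, false) - e (p.1, true)) :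
    (LinearIndependent F ((↑) : ↥(B₂ : Set V) → V) ∧
        Submodule.span F ((B₂ : Set V)) = ⊤) ∧
      (subsetSums B₁ + subsetSums B₂).card = 8 ^ l := by
  haveI : Fact (Nat.Prime 3) := ⟨by norm_num⟩
  have h3 : (3 : F) = 0 := CharP.cast_eq_zero F 3
  have h3n : (-3 : F) = 0 := by rw [h3]; ring
  set w : Fin l × Bool → V := fun p =>
      if p.2 then e (p.1, false) + e (p.1, true) else e (p.1, false) - e (p.1, true) with hw
  have neg2 : ∀ x : V, -x - x = x := by
    intro x
    have hx : x + x + x = (0 : V) := by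
      calc x + x + x = ((1:F) + 1 + 1) • x := by rw [add_smul, add_smul, one_smul]
        _ = (3 : F) • x := by norm_num
        _ = 0 := by rw [h3, zero_smul]
    calc -x - x = -(x + x + x) + x := by abel
      _ = x := by rw [hx, neg_zero, zero_add]
  -- the linear automorphism sending `e p` to `w p`
  set L : V →ₗ[F] V := e.constr F w with hL
  set M : V →ₗ[F] V := e.constr F (fun p =>
      if p.2 then e (p.1, false) - e (p.1, true) else - e (p.1, true) - e (p.1, false)) with hM
  have Lf : ∀ i, L (e (i, false)) = e (i, false) - e (i, true) := fun i => by
    rw [hL, e.constr_basis]; simp [hw]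
  have Lt : ∀ i, L (e (i, true)) = e (i, false) + e (i, true) := fun i => by
    rw [hL, e.constr_basis]; simp [hw]
  have Mf : ∀ i, M (e (i, false)) = -e (i, true) - e (i, false) := fun i => by
    rw [hM, e.constr_basis]; simp
  have Mt : ∀ i, M (e (i, true)) = e (i, false) - e (i, true) := fun i => by
    rw [hM, e.constr_basis]; simp
  have hML : M.comp L = LinearMap.id := by
    apply e.ext; rintro ⟨i, b⟩
    cases b
    · rw [LinearMap.comp_apply, LinearMap.id_apply, Lf, map_sub, Mf, Mt]
      conv_rhs => rw [← neg2 (e (i, false))]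
      abel
    · rw [LinearMap.comp_apply, LinearMap.id_apply, Lt, map_add, Mf, Mt]
      conv_rhs => rw [← neg2 (e (i, true))]
      abel
  have hLM : L.comp M = LinearMap.id := by
    apply e.ext; rintro ⟨i, b⟩
    cases b
    · rw [LinearMap.comp_apply, LinearMap.id_apply, Mf, map_sub, map_neg, Lt, Lf]
      conv_rhs => rw [← neg2 (e (i, false))]
      abel
    · rw [LinearMap.comp_apply, LinearMap.id_apply, Mt, map_sub, Lf, Lt]
      conv_rhs => rw [← neg2 (e (i, true))]
      abel
  let eqv : V ≃ₗ[F] V := LinearEquiv.ofLinear L M hLM hML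
  let b₂ : Module.Basis (Fin l × Bool) F V := e.map eqv
  have hb₂ : ⇑b₂ = w := by
    funext p
    simp [b₂, eqv, Module.Basis.map_apply, LinearEquiv.ofLinear_apply, hL, Module.Basis.constr_basis]
  have hwinj : Function.Injective w := hb₂ ▸ b₂.injective
  have hrange : (B₂ : Set V) = Set.range ⇑b₂ := by
    rw [hB₂, coe_image, coe_univ, Set.image_univ, hb₂]
  refine ⟨⟨?_, ?_⟩, ?_⟩
  · rw [hrange]
    exact b₂.linearIndependent.linearIndepOn_id
  · rw [hrange]
    exact b₂.span_eq
  -- cardinality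
  · set φ : ZMod 3 →+* F := ZMod.castHom dvd_rfl F with hφdef
    have hφ : Function.Injective φ := φ.injective
    set g : (Fin l → ZMod 3 × ZMod 3) → V := fun c =>
      ∑ p : Fin l × Bool, (if p.2 then φ (c p.1).2 else φ (c p.1).1) • e p with hg
    have hginj : Function.Injective g := by
      intro c c' h
      simp only [hg] at h
      have h'' : (fun p : Fin l × Bool => if p.2 = true then φ (c p.1).2 else φ (c p.1).1)
          = (fun p : Fin l × Bool => if p.2 = true then φ (c' p.1).2 else φ (c' p.1).1) := by
        rw [← e.repr_sum_self (fun p : Fin l × Bool => if p.2 = true then φ (c p.1).2 else φ (c p.1).1),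
          ← e.repr_sum_self (fun p : Fin l × Bool => if p.2 = true then φ (c' p.1).2 else φ (c' p.1).1)]
        exact congrArg (fun v => ⇑(e.repr v)) h
      funext i
      have h1 := congrFun h'' (i, false)
      have h2 := congrFun h'' (i, true)
      simp at h1 h2
      exact Prod.ext (hφ h1) (hφ h2)
    have hbi : ∀ (P : Prop) (inst : Decidable P), φ (bi (@decide P inst)) = if P then (1:F) else 0 := by
      intro P inst
      by_cases h : P <;> simp [bi, h]
    set cOf : Finset (Fin l × Bool) → Finset (Fin l × Bool) → Fin l → ZMod 3 × ZMod 3 :=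
      fun A B i =>
        (bi (decide ((i, false) ∈ A)) + bi (decide ((i, true) ∈ B)) + bi (decide ((i, false) ∈ B)),
         bi (decide ((i, true) ∈ A)) + bi (decide ((i, true) ∈ B)) - bi (decide ((i, false) ∈ B)))
      with hcOf
    have key : ∀ A B : Finset (Fin l × Bool),
        (∑ p ∈ A, e p) + (∑ p ∈ B, w p) = g (cOf A B) := by
      intro A B
      have hA : (∑ p ∈ A, e p) = ∑ p : Fin l × Bool, (if p ∈ A then (1:F) else 0) • e p := by
        simp [ite_smul, Finset.sum_ite_mem]
      have hB : (∑ p ∈ B, w p) = ∑ p : Fin l × Bool, (if p ∈ B then (1:F) else 0) • w p := by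
        simp [ite_smul, Finset.sum_ite_mem]
      rw [hA, hB, ← Finset.sum_add_distrib]
      simp only [hg, hcOf]
      rw [Fintype.sum_prod_type, Fintype.sum_prod_type]
      refine Finset.sum_congr rfl fun i _ => ?_
      rw [Fintype.sum_bool, Fintype.sum_bool]
      simp only [hw, if_true, if_false, Bool.false_eq_true, map_add, map_sub, hbi]
      match_scalars <;> ring
    have hset : subsetSums B₁ + subsetSums B₂
        = (Fintype.piFinset fun _ : Fin l => Tset).image g := by
      rw [hB₁, hB₂, subsetSums_image (⇑e) e.injective, subsetSums_image w hwinj]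
      ext x
      simp only [Finset.mem_add, Finset.mem_image, Finset.mem_powerset, Fintype.mem_piFinset]
      constructor
      · rintro ⟨y, ⟨A, -, rfl⟩, z, ⟨B, -, rfl⟩, rfl⟩
        exact ⟨cOf A B, fun i => mem_Tset _ _ _ _, (key A B).symm⟩
      · rintro ⟨c, hc, rfl⟩
        choose a1 a2 b1 b2 hchoice using fun i => Tset_surj (c i) (hc i)
        set A := Finset.univ.filter (fun p : Fin l × Bool =>
          (if p.2 then a2 p.1 else a1 p.1) = true) with hAdef
        set B := Finset.univ.filter (fun p : Fin l × Bool =>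
          (if p.2 then b2 p.1 else b1 p.1) = true) with hBdef
        refine ⟨_, ⟨A, subset_univ _, rfl⟩, _, ⟨B, subset_univ _, rfl⟩, ?_⟩
        rw [key A B]
        congr 1
        funext i
        have e1 : decide ((i, false) ∈ A) = a1 i := by simp [hAdef]
        have e2 : decide ((i, true) ∈ A) = a2 i := by simp [hAdef]
        have e3 : decide ((i, false) ∈ B) = b1 i := by simp [hBdef]
        have e4 : decide ((i, true) ∈ B) = b2 i := by simp [hBdef]
        rw [hcOf]
        simp only [e1, e2, e3, e4]
        exact hchoice i
    rw [hset, Finset.card_image_of_injective _ hginj, Fintype.card_piFinset]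
    simp [Tset_card]
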